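/- Let n ≥ 1. For every polynomial Q ∈ ℚ[x,y] that is weighted homogeneous of degree 4 (deg x = 1, deg y = 2), there exists a nonzero polynomial P ∈ ℚ[x,y], weighted homogeneous of degree n−1, such that P·Q lies in the ideal (h_{n+1}, h_{n+2}). (Algebraic form of the first step of Proposition 2.7: multiplication by any degree-4 class from degree n−1 to degree n+3 in the Chow ring of the Grassmannian of lines in ℙ^{n+1} is not injective.) -/

import Mathlib

open MvPolynomial

/-- The complete homogeneous symmetric polynomial of degree `k` in two variables,
expressed in the elementary symmetric polynomials `x = X 0`, `y = X 1`. -/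
noncomputable def h : ℕ → MvPolynomial (Fin 2) ℚ
  | 0 => 1
  | 1 => X 0
  | (k + 2) => X 0 * h (k + 1) - X 1 * h k


private lemma h_rec (k : ℕ) : h (k + 2) = X 0 * h (k + 1) - X 1 * h k := rfl

private lemma h_zero : h 0 = 1 := rfl
private lemma h_one : h 1 = X 0 := rfl

/-- span of `h`-basis elements of weighted degree `D`. -/
private noncomputable def T (D : ℕ) : Submodule ℚ (MvPolynomial (Fin 2) ℚ) :=
  Submodule.span ℚ {r | ∃ a c : ℕ, a + 2 * c = D ∧ r = X 1 ^ c * h a}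

private lemma mul_X0_mem {D : ℕ} {z : MvPolynomial (Fin 2) ℚ} (hz : z ∈ T D) :
    X 0 * z ∈ T (D + 1) := by
  induction hz using Submodule.span_induction with
  | mem r hr =>
      obtain ⟨a, c, hac, rfl⟩ := hr
      match a with
      | 0 =>
        have e : X 0 * (X 1 ^ c * h 0) = X 1 ^ c * h 1 := by
          rw [h_zero, h_one]; ring
        rw [e]
        exact Submodule.subset_span ⟨1, c, by omega, rfl⟩
      | (t+1) =>
        have e : X 0 * (X 1 ^ c * h (t+1)) = X 1 ^ c * h (t+2) + X 1 ^ (c+1) * h t := by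
          rw [h_rec]; ring
        rw [e]
        exact Submodule.add_mem _ (Submodule.subset_span ⟨t+2, c, by omega, rfl⟩)
          (Submodule.subset_span ⟨t, c+1, by omega, rfl⟩)
  | zero => simp
  | add u v _ _ hu hv => rw [mul_add]; exact Submodule.add_mem _ hu hv
  | smul a u _ hu => rw [mul_smul_comm]; exact Submodule.smul_mem _ _ hu

private lemma pow_mem_T (k b : ℕ) :
    (X 0 : MvPolynomial (Fin 2) ℚ) ^ k * X 1 ^ b ∈ T (k + 2 * b) := by
  induction k with
  | zero =>
    have e : (X 0 : MvPolynomial (Fin 2) ℚ) ^ 0 * X 1 ^ b = X 1 ^ b * h 0 := by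
      rw [h_zero]; ring
    rw [e]
    exact Submodule.subset_span ⟨0, b, by omega, rfl⟩
  | succ k ih =>
    have e : (X 0 : MvPolynomial (Fin 2) ℚ) ^ (k+1) * X 1 ^ b
        = X 0 * (X 0 ^ k * X 1 ^ b) := by ring
    rw [e, show k + 1 + 2 * b = (k + 2 * b) + 1 by omega]
    exact mul_X0_mem ih

private lemma h_mem_I (n : ℕ) : ∀ k, n + 1 ≤ k →
    h k ∈ Ideal.span {h (n+1), h (n+2)} := by
  intro k
  induction k using Nat.strong_induction_on with
  | _ k ih =>
    intro hk
    rcases eq_or_lt_of_le hk with h1 | h1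
    · rw [← h1]; exact Ideal.subset_span (by simp)
    rcases eq_or_lt_of_le (Nat.succ_le_of_lt h1) with h2 | h2
    · rw [← h2]; exact Ideal.subset_span (by simp)
    obtain ⟨t, rfl⟩ : ∃ t, k = t + 2 := ⟨k - 2, by omega⟩
    rw [h_rec]
    exact Submodule.sub_mem _ (Ideal.mul_mem_left _ _ (ih (t+1) (by omega) (by omega)))
      (Ideal.mul_mem_left _ _ (ih t (by omega) (by omega)))

private lemma y2h_mem (s : ℕ) :
    (X 1 : MvPolynomial (Fin 2) ℚ) ^ 2 * h s ∈ Ideal.span {h (s+2), h (s+3)} := by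
  have key : (X 1 : MvPolynomial (Fin 2) ℚ) ^ 2 * h s
      = (X 0 ^ 2 - X 1) * h (s+2) + (-(X 0)) * h (s+3) := by
    rw [show h (s+3) = X 0 * h (s+2) - X 1 * h (s+1) from rfl, h_rec s]
    ring
  rw [key]
  exact Submodule.add_mem _ (Ideal.mul_mem_left _ _ (Ideal.subset_span (by simp)))
    (Ideal.mul_mem_left _ _ (Ideal.subset_span (by simp)))

private noncomputable def mkL (n : ℕ) :
    MvPolynomial (Fin 2) ℚ →ₗ[ℚ] (MvPolynomial (Fin 2) ℚ ⧸ Ideal.span {h (n+1), h (n+2)}) :=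
  (Ideal.Quotient.mkₐ ℚ (Ideal.span {h (n+1), h (n+2)})).toLinearMap

private lemma mkL_eq_zero {n : ℕ} {z : MvPolynomial (Fin 2) ℚ}
    (hz : z ∈ Ideal.span {h (n+1), h (n+2)}) : mkL n z = 0 := by
  show Ideal.Quotient.mk _ z = 0
  rwa [Ideal.Quotient.eq_zero_iff_mem]

private noncomputable def gfam (n : ℕ) (i : Fin ((n-1)/2)) :
    MvPolynomial (Fin 2) ℚ ⧸ Ideal.span {h (n+1), h (n+2)} :=
  mkL n (X 1 ^ ((i : ℕ) + 3) * h (n + 3 - 2 * ((i : ℕ) + 3)))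

private noncomputable def NN (n : ℕ) :
    Submodule ℚ (MvPolynomial (Fin 2) ℚ ⧸ Ideal.span {h (n+1), h (n+2)}) :=
  Submodule.span ℚ (Set.range (gfam n))

private lemma T_to_NN {n : ℕ} (hn : 1 ≤ n) {z : MvPolynomial (Fin 2) ℚ}
    (hz : z ∈ T (n + 3)) : mkL n z ∈ NN n := by
  induction hz using Submodule.span_induction with
  | mem r hr =>
    obtain ⟨a, c, hac, rfl⟩ := hr
    match c with
    | 0 =>
      obtain rfl : a = n + 3 := by omega
      have : h (n+3) ∈ Ideal.span {h (n+1), h (n+2)} := h_mem_I n (n+3) (by omega)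
      rw [show (X 1 : MvPolynomial (Fin 2) ℚ) ^ 0 * h (n+3) = h (n+3) by ring,
        mkL_eq_zero this]
      exact Submodule.zero_mem _
    | 1 =>
      obtain rfl : a = n + 1 := by omega
      have : (X 1 : MvPolynomial (Fin 2) ℚ) ^ 1 * h (n+1) ∈ Ideal.span {h (n+1), h (n+2)} :=
        Ideal.mul_mem_left _ _ (Ideal.subset_span (by simp))
      rw [mkL_eq_zero this]
      exact Submodule.zero_mem _
    | 2 =>
      obtain rfl : a = n - 1 := by omega
      have hmem : (X 1 : MvPolynomial (Fin 2) ℚ) ^ 2 * h (n-1) ∈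
          Ideal.span {h (n+1), h (n+2)} := by
        have := y2h_mem (n-1)
        rwa [show n - 1 + 2 = n + 1 by omega, show n - 1 + 3 = n + 2 by omega] at this
      rw [mkL_eq_zero hmem]
      exact Submodule.zero_mem _
    | (i+3) =>
      have hi : i < (n-1)/2 := by omega
      have e1 : n + 3 - 2 * (i + 3) = a := by omega
      refine Submodule.subset_span ⟨⟨i, hi⟩, ?_⟩
      simp only [gfam, e1]
  | zero => exact Submodule.zero_mem _
  | add u v _ _ hu hv => rw [map_add]; exact Submodule.add_mem _ hu hv
  | smul q u _ hu => rw [map_smul]; exact Submodule.smul_mem _ _ hu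

private lemma finsupp_eq (v : Fin 2 →₀ ℕ) :
    v = Finsupp.single 0 (v 0) + Finsupp.single 1 (v 1) := by
  ext i
  fin_cases i <;> simp [Finsupp.single_apply]

private lemma monomial_eq_smul (v : Fin 2 →₀ ℕ) (r : ℚ) :
    monomial v r = r • ((X 0 : MvPolynomial (Fin 2) ℚ) ^ (v 0) * X 1 ^ (v 1)) := by
  rw [X_pow_eq_monomial, X_pow_eq_monomial, monomial_mul, smul_monomial, mul_one,
    smul_eq_mul, mul_one, ← finsupp_eq v]

private lemma Q_mem_span {Q : MvPolynomial (Fin 2) ℚ}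
    (hQ : Q.IsWeightedHomogeneous ![1, 2] 4) :
    Q ∈ Submodule.span ℚ ({X 0 ^ 4, X 0 ^ 2 * X 1, X 1 ^ 2} :
      Set (MvPolynomial (Fin 2) ℚ)) := by
  nth_rewrite 1 [Q.as_sum]
  apply Submodule.sum_mem
  intro v hv
  have hw : Finsupp.weight ![1, 2] v = 4 := hQ (mem_support_iff.mp hv)
  have hw' : v 0 + 2 * v 1 = 4 := by
    rw [Finsupp.weight_apply, Finsupp.sum_fintype _ _ (by intro i; simp),
      Fin.sum_univ_two] at hw
    simp only [Matrix.cons_val_zero, Matrix.cons_val_one, Matrix.head_cons,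
      smul_eq_mul, mul_one] at hw
    omega
  rw [monomial_eq_smul]
  apply Submodule.smul_mem
  apply Submodule.subset_span
  have : (v 0 = 4 ∧ v 1 = 0) ∨ (v 0 = 2 ∧ v 1 = 1) ∨ (v 0 = 0 ∧ v 1 = 2) := by omega
  rcases this with ⟨h0, h1⟩ | ⟨h0, h1⟩ | ⟨h0, h1⟩ <;> rw [h0, h1] <;> simp

/-- For every weighted homogeneous `Q` of degree `4` (with `deg x = 1`, `deg y = 2`)
there is a nonzero weighted homogeneous `P` of degree `n−1` with
`P·Q ∈ (h_{n+1}, h_{n+2})`: multiplication by a degree-4 class from degree `n−1` to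
degree `n+3` in the Chow ring of the Grassmannian of lines in `ℙ^{n+1}` is not injective. -/
theorem stmt10 (n : ℕ) (hn : 1 ≤ n) (Q : MvPolynomial (Fin 2) ℚ)
    (hQ : Q.IsWeightedHomogeneous ![1, 2] 4) :
    ∃ P : MvPolynomial (Fin 2) ℚ, P ≠ 0 ∧ P.IsWeightedHomogeneous ![1, 2] (n - 1) ∧
      P * Q ∈ (Ideal.span {h (n + 1), h (n + 2)} : Ideal (MvPolynomial (Fin 2) ℚ)) := by
  classical
  set m := (n - 1) / 2 with hm
  set v : Fin (m + 1) → MvPolynomial (Fin 2) ℚ :=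
    fun j => X 0 ^ (n - 1 - 2 * (j : ℕ)) * X 1 ^ (j : ℕ) with hv
  have hj2 : ∀ j : Fin (m + 1), 2 * (j : ℕ) ≤ n - 1 := by
    intro j
    have := j.isLt
    omega
  -- each mkL n (v j * Q) lies in NN n
  have hvQ : ∀ j : Fin (m + 1), mkL n (v j * Q) ∈ NN n := by
    intro j
    have hQ' := Q_mem_span hQ
    have heq : mkL n (v j * Q) = ((mkL n).comp (LinearMap.mulLeft ℚ (v j))) Q := rfl
    rw [heq]
    refine Submodule.span_le.mpr ?_
      (Submodule.apply_mem_span_image_of_mem_span ((mkL n).comp (LinearMap.mulLeft ℚ (v j))) hQ')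
    rintro z ⟨w, hw, rfl⟩
    simp only [Set.mem_insert_iff, Set.mem_singleton_iff] at hw
    have hle := hj2 j
    have hmk : ∀ u : MvPolynomial (Fin 2) ℚ,
        ((mkL n).comp (LinearMap.mulLeft ℚ (v j))) u = mkL n (v j * u) := fun _ => rfl
    rcases hw with rfl | rfl | rfl
    · rw [hmk]
      apply T_to_NN hn
      have e : v j * X 0 ^ 4 = X 0 ^ (n - 1 - 2 * (j : ℕ) + 4) * X 1 ^ (j : ℕ) := by
        rw [hv]; ring
      rw [e]
      have := pow_mem_T (n - 1 - 2 * (j : ℕ) + 4) (j : ℕ)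
      rwa [show n - 1 - 2 * (j : ℕ) + 4 + 2 * (j : ℕ) = n + 3 by omega] at this
    · rw [hmk]
      apply T_to_NN hn
      have e : v j * (X 0 ^ 2 * X 1) = X 0 ^ (n - 1 - 2 * (j : ℕ) + 2) * X 1 ^ ((j : ℕ) + 1) := by
        rw [hv]; ring
      rw [e]
      have := pow_mem_T (n - 1 - 2 * (j : ℕ) + 2) ((j : ℕ) + 1)
      rwa [show n - 1 - 2 * (j : ℕ) + 2 + 2 * ((j : ℕ) + 1) = n + 3 by omega] at this
    · rw [hmk]
      apply T_to_NN hn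
      have e : v j * X 1 ^ 2 = X 0 ^ (n - 1 - 2 * (j : ℕ)) * X 1 ^ ((j : ℕ) + 2) := by
        rw [hv]; ring
      rw [e]
      have := pow_mem_T (n - 1 - 2 * (j : ℕ)) ((j : ℕ) + 2)
      rwa [show n - 1 - 2 * (j : ℕ) + 2 * ((j : ℕ) + 2) = n + 3 by omega] at this
  -- dimension bound
  have hfin : FiniteDimensional ℚ (NN n) :=
    FiniteDimensional.span_of_finite ℚ (Set.finite_range _)
  have hrank : Module.finrank ℚ (NN n) ≤ m := by
    have h1 := finrank_range_le_card (R := ℚ) (gfam n)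
    simp only [Set.finrank, Fintype.card_fin] at h1
    exact h1
  -- a nontrivial linear relation
  set w' : Fin (m + 1) → NN n := fun j => ⟨mkL n (v j * Q), hvQ j⟩ with hw'
  have hnli : ¬ LinearIndependent ℚ w' := by
    intro hli
    have := hli.fintype_card_le_finrank
    rw [Fintype.card_fin] at this
    omega
  obtain ⟨g, hsum, i, hgi⟩ := Fintype.not_linearIndependent_iff.mp hnli
  set dd : Fin (m + 1) → (Fin 2 →₀ ℕ) :=
    fun j => Finsupp.single 0 (n - 1 - 2 * (j : ℕ)) + Finsupp.single 1 (j : ℕ) with hdd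
  have hvm : ∀ j : Fin (m + 1), v j = monomial (dd j) 1 := by
    intro j
    simp only [hv, hdd]
    rw [X_pow_eq_monomial, X_pow_eq_monomial, monomial_mul, mul_one]
  have hddinj : ∀ j k : Fin (m + 1), dd j = dd k → j = k := by
    intro j k hjk
    have := DFunLike.congr_fun hjk 1
    simp only [hdd, Finsupp.add_apply, Finsupp.single_apply] at this
    simp only [show ((0 : Fin 2) = 1) = False by simp, if_false, if_true, zero_add,
      show ((1 : Fin 2) = 1) = True by simp] at this
    exact Fin.ext this
  refine ⟨∑ j, g j • v j, ?_, ?_, ?_⟩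
  · -- nonzero
    intro h0
    apply hgi
    have hc : coeff (dd i) (∑ j, g j • v j) = g i := by
      rw [coeff_sum]
      rw [Finset.sum_eq_single i]
      · rw [hvm, smul_monomial, smul_eq_mul, mul_one, coeff_monomial, if_pos rfl]
      · intro j _ hji
        rw [hvm, smul_monomial, smul_eq_mul, mul_one, coeff_monomial,
          if_neg (fun hc => hji (hddinj j i hc))]
      · intro habs
        exact absurd (Finset.mem_univ i) habs
    rw [h0, coeff_zero] at hc
    exact hc.symm
  · -- weighted homogeneous of degree n - 1
    rw [← mem_weightedHomogeneousSubmodule]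
    apply Submodule.sum_mem
    intro j _
    rw [mem_weightedHomogeneousSubmodule, hvm, smul_monomial, smul_eq_mul, mul_one]
    apply isWeightedHomogeneous_monomial
    have hle := hj2 j
    rw [hdd]
    rw [Finsupp.weight_apply, Finsupp.sum_fintype _ _ (by intro ii; simp), Fin.sum_univ_two]
    simp only [Finsupp.add_apply, Finsupp.single_apply]
    norm_num
    omega
  · -- P * Q in the ideal
    have hPQ : mkL n ((∑ j, g j • v j) * Q) = 0 := by
      have e : (∑ j, g j • v j) * Q = ∑ j, g j • (v j * Q) := by
        rw [Finset.sum_mul]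
        exact Finset.sum_congr rfl fun j _ => smul_mul_assoc (g j) (v j) Q
      rw [e, map_sum]
      simp_rw [map_smul]
      have hc := congrArg (Submodule.subtype (NN n)) hsum
      simpa [hw'] using hc
    have : Ideal.Quotient.mk (Ideal.span {h (n + 1), h (n + 2)}) ((∑ j, g j • v j) * Q) = 0 :=
      hPQ
    rwa [Ideal.Quotient.eq_zero_iff_mem] at this
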